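/- For every k : ℕ, every even ℓ with 2k < ℓ ≤ 9k/4, and every x with √(2/3) < x ≤ 1, one has |E_k^{(ℓ)}(x)| ≥ (3x²/2)^k − 1. -/

import Mathlib

open Polynomial

/-- The polynomial `P_k = ((3/2)X² − (1/2)X⁴)^k`, whose coefficients are the
total weight-`w` Pauli-path coefficients of one layer of majority-voting gates
applied to `O_k = ∏_{i=1}^k Z_{3i−2}` with initial state `|0…0⟩`. -/
noncomputable def P (k : ℕ) : Polynomial ℝ :=
  (C (3/2) * X ^ 2 - C (1/2) * X ^ 4) ^ k

/-- `F k w` is the coefficient of `X^w` in `P_k`. -/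
noncomputable def F (k w : ℕ) : ℝ := (P k).coeff w

/-- `E k ℓ x = ∑_{w > ℓ} F_w(k) x^w`: the truncation error of the Pauli-path
method with cutoff `ℓ` at `x = 1 − p` (the sum is finite since `F_w(k) = 0`
for `w > 4k`). -/
noncomputable def E (k ℓ : ℕ) (x : ℝ) : ℝ :=
  ∑ w ∈ Finset.Ioc ℓ (4 * k), F k w * x ^ w

lemma alt_even (a : ℕ → ℝ) (n : ℕ) (h : ∀ j, j + 1 ≤ 2*n → a j ≤ a (j+1)) :
    a 0 ≤ ∑ j ∈ Finset.range (2*n+1), (-1:ℝ)^j * a j := by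
  induction n with
  | zero => simp
  | succ n ih =>
    have h2 : 2*(n+1)+1 = (2*n+1) + 1 + 1 := by ring
    rw [h2, Finset.sum_range_succ, Finset.sum_range_succ]
    have e1 : (-1:ℝ)^(2*n+1) = -1 := Odd.neg_one_pow ⟨n, by ring⟩
    have e2 : (-1:ℝ)^(2*n+1+1) = 1 := Even.neg_one_pow ⟨n+1, by ring⟩
    rw [e1, e2]
    have hm := h (2*n+1) (by omega)
    have ihh := ih (fun j hj => h j (by omega))
    linarith

lemma alt_odd (a : ℕ → ℝ) (n : ℕ) (h : ∀ j, j + 1 ≤ 2*n+1 → a j ≤ a (j+1)) :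
    ∑ j ∈ Finset.range (2*n+2), (-1:ℝ)^j * a j ≤ a 0 - a 1 := by
  induction n with
  | zero => norm_num [Finset.sum_range_succ]
  | succ n ih =>
    have h2 : 2*(n+1)+2 = (2*n+2) + 1 + 1 := by ring
    rw [h2, Finset.sum_range_succ, Finset.sum_range_succ]
    have e1 : (-1:ℝ)^(2*n+2) = 1 := Even.neg_one_pow ⟨n+1, by ring⟩
    have e2 : (-1:ℝ)^(2*n+2+1) = -1 := Odd.neg_one_pow ⟨n+1, by ring⟩
    rw [e1, e2]
    have hm := h (2*n+2) (by omega)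
    have ihh := ih (fun j hj => h j (by omega))
    linarith

lemma hP (k : ℕ) : P k =
    ∑ j ∈ Finset.range (k+1),
      C ((-1:ℝ)^j * (k.choose j) * 3^(k-j) * (1/2)^k) * X^(2*k+2*j) := by
  have hfac : (C (3/2:ℝ) * X ^ 2 - C (1/2) * X ^ 4) = C (1/2) * X^2 * (C 3 - X^2) := by
    have h : (C (3/2:ℝ)) = C (1/2) * C 3 := by rw [← C_mul]; norm_num
    rw [h]; ring
  rw [P, hfac, mul_pow, mul_pow, sub_pow, Finset.mul_sum, ← Finset.sum_range_reflect]
  refine Finset.sum_congr rfl (fun i hi => ?_)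
  rw [Finset.mem_range] at hi
  have hik : i ≤ k := by omega
  have e1 : k + 1 - 1 - i = k - i := by omega
  rw [e1, Nat.choose_symm hik]
  have e2 : k - (k - i) = i := by omega
  rw [e2]
  have e3 : (-1 : ℝ[X])^((k-i)+k) = (-1)^i := by
    rw [show (k-i) + k = i + 2*(k-i) by omega, pow_add, pow_mul]; norm_num
  rw [e3]
  simp only [C_mul, C_pow, map_neg, map_one, map_natCast]
  rw [← pow_mul, ← pow_mul]
  rw [show 2*k+2*i = 2*k + i*2 by ring, pow_add]
  ring

lemma hFcoeff (k w : ℕ) : F k w =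
    ∑ j ∈ Finset.range (k+1),
      if w = 2*k+2*j then (-1:ℝ)^j * (k.choose j) * 3^(k-j) * (1/2)^k else 0 := by
  rw [F, hP, finset_sum_coeff]
  refine Finset.sum_congr rfl (fun j _ => ?_)
  rw [coeff_C_mul, coeff_X_pow, mul_ite, mul_one, mul_zero]

lemma natDeg (k : ℕ) : (P k).natDegree ≤ 4 * k := by
  rw [P]
  calc ((C (3/2:ℝ) * X ^ 2 - C (1/2) * X ^ 4) ^ k).natDegree
      ≤ k * (C (3/2:ℝ) * X ^ 2 - C (1/2) * X ^ 4).natDegree := natDegree_pow_le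
    _ ≤ k * 4 := by
        refine Nat.mul_le_mul_left k ?_
        refine le_trans (natDegree_sub_le _ _) ?_
        refine max_le (le_trans (natDegree_C_mul_le _ _) ?_) (le_trans (natDegree_C_mul_le _ _) ?_)
        · simpa using natDegree_X_pow_le (R := ℝ) 2 |>.trans (by norm_num)
        · simpa using natDegree_X_pow_le (R := ℝ) 4
    _ = 4 * k := by ring


set_option maxHeartbeats 1000000 in
theorem truncation_error_lower_bound (k ℓ : ℕ) (hℓ : Even ℓ)
    (h1 : 2 * k < ℓ) (h2 : 4 * ℓ ≤ 9 * k)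
    (x : ℝ) (hx0 : Real.sqrt (2/3) < x) (hx1 : x ≤ 1) :
    (3 * x ^ 2 / 2) ^ k - 1 ≤ |E k ℓ x| := by
  -- basic numeric facts
  obtain ⟨c, hc⟩ := hℓ
  set m : ℕ := c - k with hm
  have hlm : ℓ = 2*k + 2*m := by omega
  have hm1 : 1 ≤ m := by omega
  have hmk : 8 * m ≤ k := by omega
  have hk8 : 8 ≤ k := by omega
  have hxpos : 0 < x := lt_of_le_of_lt (Real.sqrt_nonneg _) hx0
  have hx2 : 2/3 < x^2 := by
    have := Real.sq_sqrt (by norm_num : (2/3:ℝ) ≥ 0)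
    nlinarith [Real.sqrt_nonneg (2/3 : ℝ)]
  have hx21 : x^2 ≤ 1 := by nlinarith
  -- the term sequence
  set a : ℕ → ℝ := fun j => (k.choose j : ℝ) * 3^(k-j) * (1/2)^k * x^(2*k+2*j) with ha
  have hapos : ∀ j, j ≤ k → 0 < a j := by
    intro j hj
    have : 0 < (k.choose j : ℝ) := by
      exact_mod_cast Nat.choose_pos hj
    positivity
  -- monotonicity
  have hmono : ∀ j, j + 1 ≤ m → a j ≤ a (j+1) := by
    intro j hj
    have hjk : j + 1 ≤ k := by omega
    have hch : (k.choose (j+1) : ℝ) * ((j:ℝ)+1) = (k.choose j : ℝ) * ((k:ℝ) - j) := by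
      have h0 := congrArg (Nat.cast : ℕ → ℝ) (Nat.choose_succ_right_eq k j)
      push_cast [Nat.cast_sub (show j ≤ k by omega)] at h0
      linarith
    have h3 : (3:ℝ)^(k-j) = 3 * 3^(k-(j+1)) := by
      rw [← pow_succ']; congr 1; omega
    have hxp : x^(2*k+2*(j+1)) = x^(2*k+2*j) * x^2 := by
      rw [show 2*k+2*(j+1) = (2*k+2*j)+2 by ring, pow_add]
    have hineq : 3 * ((j:ℝ)+1) ≤ ((k:ℝ) - j) * x^2 := by
      have h9 : 9 * (j+1) ≤ 2 * (k - j) := by omega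
      have h9' : (9:ℝ) * ((j:ℝ)+1) ≤ 2 * ((k:ℝ) - (j:ℝ)) := by
        have := (Nat.cast_le (α := ℝ)).2 h9
        push_cast [Nat.cast_sub (show j ≤ k by omega)] at this
        linarith
      nlinarith
    have hchpos : 0 < (k.choose j : ℝ) := by exact_mod_cast Nat.choose_pos (by omega : j ≤ k)
    have hgoal : a j * (3 * ((j:ℝ)+1)) ≤ a (j+1) * (3 * ((j:ℝ)+1)) := by
      have lhs : a j * (3 * ((j:ℝ)+1)) =
          (k.choose j : ℝ) * 3^(k-(j+1)) * (1/2)^k * x^(2*k+2*j) * (3 * (3 * ((j:ℝ)+1))) := by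
        rw [ha]; simp only []; rw [h3]; ring
      have rhs : a (j+1) * (3 * ((j:ℝ)+1)) =
          (k.choose j : ℝ) * 3^(k-(j+1)) * (1/2)^k * x^(2*k+2*j) * (3 * (((k:ℝ) - j) * x^2)) := by
        rw [ha]; simp only []; rw [hxp]
        linear_combination (3 * 3^(k-(j+1)) * (1/2:ℝ)^k * x^(2*k+2*j) * x^2) * hch
      rw [lhs, rhs]
      have hb : (0:ℝ) < (k.choose j : ℝ) * 3^(k-(j+1)) * (1/2)^k * x^(2*k+2*j) := by positivity
      nlinarith
    have hpos : (0:ℝ) < 3 * ((j:ℝ)+1) := by positivity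
    exact le_of_mul_le_mul_right hgoal hpos
  -- truncated sum as alternating sum
  set T : ℝ := ∑ w ∈ Finset.range (ℓ+1), F k w * x^w with hT
  have hTval : T = ∑ j ∈ Finset.range (m+1), (-1:ℝ)^j * a j := by
    rw [hT]
    calc ∑ w ∈ Finset.range (ℓ+1), F k w * x^w
        = ∑ w ∈ Finset.range (ℓ+1), ∑ j ∈ Finset.range (k+1),
            (if w = 2*k+2*j then ((-1:ℝ)^j * (k.choose j) * 3^(k-j) * (1/2)^k) * x^(2*k+2*j) else 0) := by
          refine Finset.sum_congr rfl (fun w _ => ?_)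
          rw [hFcoeff, Finset.sum_mul]
          refine Finset.sum_congr rfl (fun j _ => ?_)
          split_ifs with h
          · rw [h]
          · ring
      _ = ∑ j ∈ Finset.range (k+1), ∑ w ∈ Finset.range (ℓ+1),
            (if w = 2*k+2*j then ((-1:ℝ)^j * (k.choose j) * 3^(k-j) * (1/2)^k) * x^(2*k+2*j) else 0) :=
          Finset.sum_comm
      _ = ∑ j ∈ Finset.range (k+1),
            (if 2*k+2*j ∈ Finset.range (ℓ+1) then ((-1:ℝ)^j * (k.choose j) * 3^(k-j) * (1/2)^k) * x^(2*k+2*j) else 0) :=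
          Finset.sum_congr rfl (fun j _ => Finset.sum_ite_eq' _ _ _)
      _ = ∑ j ∈ Finset.range (k+1),
            (if j ∈ Finset.range (m+1) then ((-1:ℝ)^j * (k.choose j) * 3^(k-j) * (1/2)^k) * x^(2*k+2*j) else 0) := by
          refine Finset.sum_congr rfl (fun j _ => ?_)
          have : (2*k+2*j ∈ Finset.range (ℓ+1)) ↔ (j ∈ Finset.range (m+1)) := by
            simp only [Finset.mem_range]; omega
          simp only [this]
      _ = ∑ j ∈ Finset.range (k+1) ∩ Finset.range (m+1),
            ((-1:ℝ)^j * (k.choose j) * 3^(k-j) * (1/2)^k) * x^(2*k+2*j) :=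
          Finset.sum_ite_mem _ _ _
      _ = ∑ j ∈ Finset.range (m+1),
            ((-1:ℝ)^j * (k.choose j) * 3^(k-j) * (1/2)^k) * x^(2*k+2*j) := by
          rw [Finset.inter_eq_right.2 (Finset.range_subset_range.2 (by omega))]
      _ = ∑ j ∈ Finset.range (m+1), (-1:ℝ)^j * a j := by
          refine Finset.sum_congr rfl (fun j _ => ?_)
          rw [ha]; ring
  -- eval as full sum and split
  have heval : (P k).eval x = ∑ w ∈ Finset.range (4*k+1), F k w * x^w := by
    rw [eval_eq_sum_range' (lt_of_le_of_lt (natDeg k) (Nat.lt_succ_self _))]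
    rfl
  have hico : Finset.Ico (ℓ+1) (4*k+1) = Finset.Ioc ℓ (4*k) := by
    ext w; simp only [Finset.mem_Ico, Finset.mem_Ioc]; omega
  have hsplit : (P k).eval x = T + E k ℓ x := by
    rw [heval, hT, E, ← hico, Finset.range_eq_Ico, Finset.range_eq_Ico]
    exact (Finset.sum_Ico_consecutive _ (Nat.zero_le _) (by omega : ℓ+1 ≤ 4*k+1)).symm
  -- eval bounds
  have hevalval : (P k).eval x = ((3/2)*x^2 - (1/2)*x^4)^k := by simp [P]
  have he0 : 0 ≤ (P k).eval x := by
    rw [hevalval]; apply pow_nonneg; nlinarith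
  have he1 : (P k).eval x ≤ 1 := by
    rw [hevalval]
    apply pow_le_one₀ (by nlinarith) (by nlinarith)
  have ha0 : a 0 = (3 * x^2 / 2)^k := by
    rw [ha]; simp only [Nat.choose_zero_right, Nat.cast_one, Nat.sub_zero, mul_zero, add_zero]
    rw [show (3 * x^2 / 2 : ℝ) = 3 * x^2 * (1/2) by ring, mul_pow, mul_pow, pow_mul]
    ring
  have ha1 : a 1 = (k:ℝ) * x^2 / 3 * a 0 := by
    rw [ha]; simp only [Nat.choose_one_right, Nat.choose_zero_right, Nat.cast_one]
    rw [show (3:ℝ)^(k-0) = 3 * 3^(k-1) by rw [← pow_succ']; congr 1; omega,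
      show 2*k+2*1 = (2*k+2*0)+2 by ring, pow_add]
    ring
  rcases Nat.even_or_odd m with ⟨n, hn⟩ | ⟨n, hn⟩
  · -- m even
    have hTge : a 0 ≤ T := by
      rw [hTval, show m + 1 = 2*n+1 by omega]
      exact alt_even a n (fun j hj => hmono j (by omega))
    have hEa : E k ℓ x = (P k).eval x - T := by linarith [hsplit]
    have habs : T - (P k).eval x ≤ |E k ℓ x| := by
      rw [hEa, abs_sub_comm]
      exact le_abs_self _
    rw [← ha0]; linarith
  · -- m odd
    have hTle : T ≤ a 0 - a 1 := by
      rw [hTval, show m + 1 = 2*n+2 by omega]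
      exact alt_odd a n (fun j hj => hmono j (by omega))
    have habs : (P k).eval x - T ≤ |E k ℓ x| := by
      have hEa : E k ℓ x = (P k).eval x - T := by linarith [hsplit]
      rw [hEa]; exact le_abs_self _
    have key : 2 * a 0 ≤ a 1 + 1 := by
      rcases eq_or_lt_of_le hk8 with rfl | hk9
      · -- k = 8
        set t : ℝ := 3 * x^2 / 2 with htdef
        have ht : 1 < t := by rw [htdef]; linarith
        have ha0t : a 0 = t^8 := by rw [ha0]
        have ha1t : a 1 = (16/9) * t^9 := by
          rw [ha1, ha0t, show x^2 = 2*t/3 by rw [htdef]; ring]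
          push_cast; ring
        have hfac : 16*t^9 - 18*t^8 + 2 =
            (t-1)^2 * (16*t^7 + 14*t^6 + 12*t^5 + 10*t^4 + 8*t^3 + 6*t^2 + 4*t + 2) := by ring
        have hnn : 0 ≤ (t-1)^2 * (16*t^7 + 14*t^6 + 12*t^5 + 10*t^4 + 8*t^3 + 6*t^2 + 4*t + 2) := by
          have h0t : (0:ℝ) < t := by linarith
          positivity
        rw [ha0t, ha1t]; linarith
      · -- k ≥ 9
        have hk9' : (9:ℝ) ≤ (k:ℝ) := by exact_mod_cast hk9
        have h6 : (6:ℝ) < (k:ℝ) * x^2 := by nlinarith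
        have ha0p : 0 < a 0 := hapos 0 (by omega)
        nlinarith [mul_pos (show (0:ℝ) < (k:ℝ)*x^2 - 6 by linarith) ha0p]
    rw [← ha0]; linarith
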